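/- Let (D_n) be a nonnegative integrable stochastic process adapted to a filtration (𝓕_n) satisfying E[D_{n+1} | 𝓕_n] ≤ D_n (1 − κ 1_{A_n}) for some constant 0 < κ < 1 and events A_n ∈ 𝓕_n. Suppose (1/n) ∑_{i=1}^{n-1} 1_{A_i} → c > 0 almost surely. Then for every 0 < ρ < −c·log(1−κ), we have e^{nρ} D_n → 0 almost surely. -/

import Mathlib

open MeasureTheory Filter

/-- Supermartingale argument: if a nonnegative adapted integrable process `D` satisfies
`E[D_{n+1} | 𝓕_n] ≤ D_n (1 - κ 1_{A_n})` with `0 < κ < 1`, `A_n ∈ 𝓕_n`, and the events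
`A_n` have a.s. limiting frequency `c > 0`, then `e^{nρ} D_n → 0` a.s. for every
`0 < ρ < -c log(1-κ)`. -/
theorem exp_decay_of_supermartingale
    {Ω : Type*} {m : MeasurableSpace Ω} (μ : Measure Ω) [IsProbabilityMeasure μ]
    (ℱ : Filtration ℕ m) (D : ℕ → Ω → ℝ)
    (hadapt : StronglyAdapted ℱ D) (hD0 : ∀ n ω, 0 ≤ D n ω)
    (hDint : ∀ n, Integrable (D n) μ)
    (A : ℕ → Set Ω) (hA : ∀ n, MeasurableSet[ℱ n] (A n))
    (κ : ℝ) (hκ0 : 0 < κ) (hκ1 : κ < 1)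
    (hsuper : ∀ n, μ[D (n + 1) | ℱ n]
        ≤ᵐ[μ] fun ω => D n ω * (1 - κ * Set.indicator (A n) (fun _ => (1 : ℝ)) ω))
    (c : ℝ) (hc : 0 < c)
    (hfreq : ∀ᵐ ω ∂μ,
      Tendsto (fun n : ℕ =>
          (∑ i ∈ Finset.Ico 1 n, Set.indicator (A i) (fun _ => (1 : ℝ)) ω) / n)
        atTop (nhds c)) :
    ∀ ρ : ℝ, 0 < ρ → ρ < -(c * Real.log (1 - κ)) →
      ∀ᵐ ω ∂μ, Tendsto (fun n : ℕ => Real.exp (n * ρ) * D n ω) atTop (nhds 0) := by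
  intro ρ hρ0 hρ
  have h1κ : (0:ℝ) < 1 - κ := by linarith
  set L : ℝ := Real.log (1 - κ) with hLdef
  have hLneg : L < 0 := Real.log_neg h1κ (by linarith)
  -- the counting process
  set S : ℕ → Ω → ℝ :=
    fun n ω => ∑ i ∈ Finset.range n, Set.indicator (A i) (fun _ => (1:ℝ)) ω with hSdef
  have hind0 : ∀ i (ω : Ω), 0 ≤ Set.indicator (A i) (fun _ => (1:ℝ)) ω :=
    fun i ω => Set.indicator_nonneg (fun _ _ => zero_le_one) ω
  have hind1 : ∀ i (ω : Ω), Set.indicator (A i) (fun _ => (1:ℝ)) ω ≤ 1 :=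
    fun i ω => Set.indicator_apply_le' (fun _ => le_rfl) (fun _ => zero_le_one)
  have hS0 : ∀ n ω, 0 ≤ S n ω :=
    fun n ω => Finset.sum_nonneg fun i _ => hind0 i ω
  have hSle : ∀ n ω, S n ω ≤ n := by
    intro n ω
    calc S n ω ≤ ∑ i ∈ Finset.range n, (1:ℝ) :=
          Finset.sum_le_sum fun i _ => hind1 i ω
      _ = n := by simp
  -- measurability of S k with respect to ℱ n for k ≤ n + 1
  have hSmeas : ∀ k n, k ≤ n + 1 → Measurable[ℱ n] (S k) := by
    intro k n hk
    apply Finset.measurable_sum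
    intro i hi
    have hi' : i ≤ n := by
      have := Finset.mem_range.mp hi; omega
    exact measurable_const.indicator (ℱ.mono hi' _ (hA i))
  -- the rescaled process
  set M : ℕ → Ω → ℝ := fun n ω => Real.exp (-L * S n ω) * D n ω with hMdef
  have hM0 : ∀ n ω, 0 ≤ M n ω := fun n ω => mul_nonneg (Real.exp_nonneg _) (hD0 n ω)
  have hexpmeas : ∀ k n, k ≤ n + 1 →
      Measurable[ℱ n] (fun ω => Real.exp (-L * S k ω)) := by
    intro k n hk
    exact Real.measurable_exp.comp ((hSmeas k n hk).const_mul (-L))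
  have hMint : ∀ n, Integrable (M n) μ := by
    intro n
    refine (hDint n).bdd_mul
      (f := fun ω => Real.exp (-L * S n ω)) (c := Real.exp (-L * n)) ?_ ?_
    · exact ((hexpmeas n n (Nat.le_succ n)).mono (ℱ.le n) le_rfl).aestronglyMeasurable
    · refine Filter.Eventually.of_forall fun ω => ?_
      rw [Real.norm_of_nonneg (Real.exp_nonneg _)]
      apply Real.exp_le_exp.mpr
      have := hSle n ω
      nlinarith [hS0 n ω]
  -- M is a supermartingale
  have hMadp : StronglyAdapted ℱ M := by
    intro n
    exact ((hexpmeas n n (Nat.le_succ n)).stronglyMeasurable).mul (hadapt n)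
  have hMsuper : Supermartingale M ℱ μ := by
    refine supermartingale_nat hMadp hMint fun n => ?_
    have hg : StronglyMeasurable[ℱ n] (fun ω => Real.exp (-L * S (n+1) ω)) :=
      (hexpmeas (n+1) n le_rfl).stronglyMeasurable
    have heq : μ[M (n+1) | ℱ n]
        =ᵐ[μ] (fun ω => Real.exp (-L * S (n+1) ω)) * μ[D (n+1) | ℱ n] :=
      condExp_mul_of_stronglyMeasurable_left hg (hMint (n+1)) (hDint (n+1))
    filter_upwards [heq, hsuper n] with ω h1 h2
    rw [h1, Pi.mul_apply]
    have hstep : Real.exp (-L * S (n+1) ω) * (μ[D (n + 1) | ℱ n]) ω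
        ≤ Real.exp (-L * S (n+1) ω) *
          (D n ω * (1 - κ * Set.indicator (A n) (fun _ => (1:ℝ)) ω)) :=
      mul_le_mul_of_nonneg_left h2 (Real.exp_nonneg _)
    refine hstep.trans (le_of_eq ?_)
    rcases Classical.em (ω ∈ A n) with hmem | hmem
    · have hSsucc : S (n+1) ω = S n ω + 1 := by
        simp [hSdef, Finset.sum_range_succ, Set.indicator_of_mem hmem]
      have hindm : Set.indicator (A n) (fun _ => (1:ℝ)) ω = 1 :=
        Set.indicator_of_mem hmem _
      rw [hSsucc, hindm, mul_one]
      have hexpL : Real.exp L = 1 - κ := Real.exp_log h1κ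
      have h1 : Real.exp (-L * (S n ω + 1)) * (1 - κ) = Real.exp (-L * S n ω) := by
        rw [← hexpL, ← Real.exp_add]
        ring_nf
      calc Real.exp (-L * (S n ω + 1)) * (D n ω * (1 - κ))
          = (Real.exp (-L * (S n ω + 1)) * (1 - κ)) * D n ω := by ring
        _ = Real.exp (-L * S n ω) * D n ω := by rw [h1]
    · have hSsucc : S (n+1) ω = S n ω := by
        simp [hSdef, Finset.sum_range_succ, Set.indicator_of_notMem hmem]
      have hindm : Set.indicator (A n) (fun _ => (1:ℝ)) ω = 0 :=
        Set.indicator_of_notMem hmem _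
      rw [hSsucc, hindm]
      ring
  -- L¹ bound
  have hintle : ∀ n, ∫ ω, M n ω ∂μ ≤ ∫ ω, M 0 ω ∂μ := by
    intro n
    have h1 : ∫ ω, M n ω ∂μ = ∫ ω, (μ[M n | ℱ 0]) ω ∂μ := (integral_condExp (ℱ.le 0)).symm
    rw [h1]
    exact integral_mono_ae integrable_condExp (hMint 0) (hMsuper.2.1 0 n (Nat.zero_le n))
  have hsn : ∀ n, eLpNorm (M n) 1 μ = ENNReal.ofReal (∫ ω, M n ω ∂μ) := by
    intro n
    rw [eLpNorm_one_eq_lintegral_enorm, ← ofReal_integral_norm_eq_lintegral_enorm (hMint n)]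
    congr 1
    apply integral_congr_ae
    exact Filter.Eventually.of_forall fun ω => Real.norm_of_nonneg (hM0 n ω)
  have hbdd : ∀ n, eLpNorm ((-M) n) 1 μ ≤ (∫ ω, M 0 ω ∂μ).toNNReal := by
    intro n
    have : (-M) n = -(M n) := rfl
    rw [this, eLpNorm_neg, hsn n]
    have : ((∫ ω, M 0 ω ∂μ).toNNReal : ENNReal) = ENNReal.ofReal (∫ ω, M 0 ω ∂μ) := rfl
    rw [this]
    exact ENNReal.ofReal_le_ofReal (hintle n)
  -- a.s. convergence of M
  have hconv : ∀ᵐ ω ∂μ, ∃ l, Tendsto (fun n => M n ω) atTop (nhds l) := by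
    filter_upwards [hMsuper.neg.exists_ae_tendsto_of_bdd hbdd] with ω hω
    obtain ⟨l, hl⟩ := hω
    refine ⟨-l, ?_⟩
    have := hl.neg
    simpa using this
  -- conclusion
  filter_upwards [hconv, hfreq] with ω hωM hωf
  obtain ⟨l, hl⟩ := hωM
  -- S n ω / n → c
  have hSfreq : Tendsto (fun n : ℕ => S n ω / n) atTop (nhds c) := by
    have h0 : Tendsto (fun n : ℕ =>
        (Set.indicator (A 0) (fun _ => (1:ℝ)) ω) / n) atTop (nhds 0) :=
      tendsto_const_div_atTop_nhds_zero_nat _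
    have hadd := h0.add hωf
    rw [zero_add] at hadd
    refine hadd.congr' ?_
    filter_upwards [eventually_ge_atTop 1] with n hn
    have hsplit : S n ω = Set.indicator (A 0) (fun _ => (1:ℝ)) ω
        + ∑ i ∈ Finset.Ico 1 n, Set.indicator (A i) (fun _ => (1:ℝ)) ω := by
      have hcons := Finset.sum_Ico_consecutive
        (f := fun i => Set.indicator (A i) (fun _ => (1:ℝ)) ω) (Nat.zero_le 1) hn
      simp only [hSdef, Finset.range_eq_Ico]
      rw [← hcons]
      simp
    rw [hsplit, add_div]
  -- the exponent tends to -∞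
  have hexp : Tendsto (fun n : ℕ => (n:ℝ) * ρ + L * S n ω) atTop atBot := by
    have hco : ρ + L * c < 0 := by
      have : ρ < -(c * L) := hρ
      nlinarith
    have h1 : Tendsto (fun n : ℕ => ρ + L * (S n ω / n)) atTop (nhds (ρ + L * c)) :=
      tendsto_const_nhds.add (hSfreq.const_mul L)
    have h2 : Tendsto (fun n : ℕ => (n:ℝ)) atTop atTop := tendsto_natCast_atTop_atTop
    have h3 := h2.atTop_mul_neg hco h1
    refine h3.congr' ?_
    filter_upwards [eventually_ge_atTop 1] with n hn
    have hn0 : (n:ℝ) ≠ 0 := Nat.cast_ne_zero.mpr (by omega)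
    field_simp
  have hexp0 : Tendsto (fun n : ℕ => Real.exp ((n:ℝ) * ρ + L * S n ω)) atTop (nhds 0) :=
    Real.tendsto_exp_atBot.comp hexp
  have hmul : Tendsto (fun n : ℕ => M n ω * Real.exp ((n:ℝ) * ρ + L * S n ω))
      atTop (nhds (l * 0)) := hl.mul hexp0
  rw [mul_zero] at hmul
  refine hmul.congr fun n => ?_
  have h1 : Real.exp (-L * S n ω) * Real.exp (L * S n ω) = 1 := by
    rw [← Real.exp_add]
    ring_nf
    exact Real.exp_zero
  calc M n ω * Real.exp ((n:ℝ) * ρ + L * S n ω)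
      = (Real.exp (-L * S n ω) * Real.exp (L * S n ω)) * (Real.exp ((n:ℝ) * ρ) * D n ω) := by
        rw [Real.exp_add]; ring
    _ = Real.exp ((n:ℝ) * ρ) * D n ω := by rw [h1, one_mul]
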